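/- Let α > 0, c₁ > 0 and let c₂, d, k₀ be real constants. Define f : ℝ² → ℝ (for u ≠ 0, U ≠ 0) by f(u,U) = −√(c₁/(2α)) · tanh( √(α/(2c₁)) · ( c₁·ln|u| + c₂·ln|U| + d·u·U + k₀ ) ). Then for every u ≠ 0 and U ≠ 0, f satisfies the recurrence system f(u,U)²·α·(d·u·U/c₁ + 1) − c₁/2 − d·u·U/2 − u·(∂f/∂u)(u,U) = 0 and f(u,U)²·α·(d·u·U/c₁ + c₂/c₁) − c₂/2 − d·u·U/2 − U·(∂f/∂U)(u,U) = 0, where ∂f/∂u denotes the derivative of the function u ↦ f(u,U) and ∂f/∂U the derivative of U ↦ f(u,U). -/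

import Mathlib

lemma hasDerivAt_tanh' (x : ℝ) : HasDerivAt Real.tanh (1 / Real.cosh x ^ 2) x := by
  have hc : Real.cosh x ≠ 0 := (Real.cosh_pos x).ne'
  have h := (Real.hasDerivAt_sinh x).div (Real.hasDerivAt_cosh x) hc
  have heq : (Real.cosh x * Real.cosh x - Real.sinh x * Real.sinh x) / Real.cosh x ^ 2
      = 1 / Real.cosh x ^ 2 := by
    rw [show Real.cosh x * Real.cosh x - Real.sinh x * Real.sinh x
        = Real.cosh x ^ 2 - Real.sinh x ^ 2 by ring, Real.cosh_sq_sub_sinh_sq]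
  have hfun : (Real.sinh / Real.cosh) = Real.tanh := by
    funext y; rw [Pi.div_apply, Real.tanh_eq_sinh_div_cosh]
  rw [hfun, heq] at h
  exact h

lemma tanh_sq' (x : ℝ) : Real.tanh x ^ 2 = 1 - 1 / Real.cosh x ^ 2 := by
  have hc : Real.cosh x ≠ 0 := (Real.cosh_pos x).ne'
  have h := Real.cosh_sq_sub_sinh_sq x
  rw [Real.tanh_eq_sinh_div_cosh, div_pow]
  field_simp
  linarith

theorem stmt_0 (α c₁ c₂ d k₀ : ℝ) (hα : 0 < α) (hc₁ : 0 < c₁)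
    (f : ℝ → ℝ → ℝ)
    (hf : ∀ u U : ℝ, f u U =
      -Real.sqrt (c₁ / (2 * α)) *
        Real.tanh (Real.sqrt (α / (2 * c₁)) *
          (c₁ * Real.log |u| + c₂ * Real.log |U| + d * u * U + k₀))) :
    ∀ u U : ℝ, u ≠ 0 → U ≠ 0 →
      (f u U) ^ 2 * α * (d * u * U / c₁ + 1) - c₁ / 2 - d * u * U / 2 -
          u * deriv (fun u' => f u' U) u = 0 ∧
      (f u U) ^ 2 * α * (d * u * U / c₁ + c₂ / c₁) - c₂ / 2 - d * u * U / 2 -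
          U * deriv (fun U' => f u U') U = 0 := by
  intro u U hu hU
  set A := Real.sqrt (c₁ / (2 * α)) with hA
  set B := Real.sqrt (α / (2 * c₁)) with hB
  have hAsq : A ^ 2 = c₁ / (2 * α) := Real.sq_sqrt (by positivity)
  have hAB : A * B = 1 / 2 := by
    rw [hA, hB, ← Real.sqrt_mul (by positivity)]
    rw [show c₁ / (2 * α) * (α / (2 * c₁)) = 1 / 4 by field_simp; ring]
    rw [show (1:ℝ)/4 = (1/2)^2 by norm_num, Real.sqrt_sq (by norm_num)]
  set g : ℝ → ℝ → ℝ := fun u' U' =>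
    B * (c₁ * Real.log |u'| + c₂ * Real.log |U'| + d * u' * U' + k₀) with hg
  have hlogu : HasDerivAt (fun u' : ℝ => Real.log |u'|) u⁻¹ u := by
    have h : (fun u' : ℝ => Real.log |u'|) = Real.log := by
      funext y; rw [Real.log_abs]
    rw [h]; exact Real.hasDerivAt_log hu
  have hlogU : HasDerivAt (fun U' : ℝ => Real.log |U'|) U⁻¹ U := by
    have h : (fun U' : ℝ => Real.log |U'|) = Real.log := by
      funext y; rw [Real.log_abs]
    rw [h]; exact Real.hasDerivAt_log hU
  have hgu : HasDerivAt (fun u' => g u' U) (B * (c₁ * u⁻¹ + d * U)) u := by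
    have h1 := ((((hlogu.const_mul c₁).add_const (c₂ * Real.log |U|)).add
      (((hasDerivAt_id u).const_mul d).mul_const U)).add_const k₀).const_mul B
    exact h1.congr_deriv (by ring)
  have hgU : HasDerivAt (fun U' => g u U') (B * (c₂ * U⁻¹ + d * u)) U := by
    have h1 := ((((hlogU.const_mul c₂).const_add (c₁ * Real.log |u|)).add
      ((hasDerivAt_id U).const_mul (d * u))).add_const k₀).const_mul B
    exact h1.congr_deriv (by ring)
  have hffun : ∀ u' U', f u' U' = -A * Real.tanh (g u' U') := by
    intro u' U'; rw [hf]
  set s : ℝ := 1 / Real.cosh (g u U) ^ 2 with hs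
  set t : ℝ := Real.tanh (g u U) with ht
  have hts : t ^ 2 = 1 - s := tanh_sq' _
  have hdu : deriv (fun u' => f u' U) u = -A * (s * (B * (c₁ * u⁻¹ + d * U))) := by
    have h : HasDerivAt (fun u' => f u' U) (-A * (s * (B * (c₁ * u⁻¹ + d * U)))) u := by
      have h2 := ((hasDerivAt_tanh' (g u U)).comp u hgu).const_mul (-A)
      simp only [hffun]
      exact h2
    exact h.deriv
  have hdU : deriv (fun U' => f u U') U = -A * (s * (B * (c₂ * U⁻¹ + d * u))) := by
    have h : HasDerivAt (fun U' => f u U') (-A * (s * (B * (c₂ * U⁻¹ + d * u)))) U := by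
      have h2 := ((hasDerivAt_tanh' (g u U)).comp U hgU).const_mul (-A)
      simp only [hffun]
      exact h2
    exact h.deriv
  have hfv : f u U = -A * t := hffun u U
  clear_value s t
  have hinva : α * α⁻¹ = 1 := mul_inv_cancel₀ hα.ne'
  have hinvu : u * u⁻¹ = 1 := mul_inv_cancel₀ hu
  have hinvU : U * U⁻¹ = 1 := mul_inv_cancel₀ hU
  constructor
  · rw [hdu, hfv]
    field_simp
    linear_combination (2*α*(d*u*U+c₁)*t^2) * hAsq + (c₁*(d*u*U+c₁)) * hts
      + (2*c₁*s*(c₁+d*u*U)) * hAB + (c₁*t^2*(d*u*U+c₁)) * hinva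
  · rw [hdU, hfv]
    field_simp
    linear_combination (2*α*(d*u*U+c₂)*t^2) * hAsq + (c₁*(d*u*U+c₂)) * hts
      + (2*c₁*s*(c₂+d*u*U)) * hAB + (c₁*t^2*(d*u*U+c₂)) * hinva
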